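/- Suppose u : 2^[n] → ℝ≥0 is a normalized, monotone, submodular and second-order supermodular set function and c : 2^[n] → ℝ≥0 is modular with positive singleton costs. If a permutation L of [n] is locally optimal with respect to moves (no move-neighbor has strictly smaller objective value), then the objective value of L is at most 4 times the minimum objective value over all permutations of [n]. -/

import Mathlib

open Finset

/-- The set of the first `k` elements of the list `L`. -/
def prefSet {n : ℕ} (L : List (Fin n)) (k : ℕ) : Finset (Fin n) := (L.take k).toFinset

/-- Marginal value `f(e|S) = f(S ∪ {e}) - f S`. -/
noncomputable def marg {n : ℕ} (f : Finset (Fin n) → ℝ) (e : Fin n) (S : Finset (Fin n)) : ℝ :=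
  f (insert e S) - f S

/-- `L` is a listing of all elements of `[n]` (a permutation of `[n]`). -/
def IsPermList {n : ℕ} (L : List (Fin n)) : Prop := L.Nodup ∧ ∀ x : Fin n, x ∈ L

/-- The objective value `∑_{i=1}^n c(S_i)(u(S_i) - u(S_{i-1}))`. -/
noncomputable def objective {n : ℕ} (u c : Finset (Fin n) → ℝ) (L : List (Fin n)) : ℝ :=
  ∑ i ∈ Finset.range L.length,
    c (prefSet L (i + 1)) * (u (prefSet L (i + 1)) - u (prefSet L i))

/-- The element in (1-indexed) position `k` of the list `L`. -/
def elemAt {n : ℕ} [NeZero n] (L : List (Fin n)) (k : ℕ) : Fin n := L.getD (k - 1) default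

/-- The quantity `b_{ij} = u(o_i | O_{i-1} ∪ L_{j-1}) - u(o_i | O_{i-1} ∪ L_{j-1} ∪ {l_j})`. -/
noncomputable def bmat {n : ℕ} [NeZero n] (u : Finset (Fin n) → ℝ) (L O : List (Fin n))
    (i j : ℕ) : ℝ :=
  marg u (elemAt O i) (prefSet O (i - 1) ∪ prefSet L (j - 1)) -
    marg u (elemAt O i) (insert (elemAt L j) (prefSet O (i - 1) ∪ prefSet L (j - 1)))

/-- Monotone set function. -/
def Mono {n : ℕ} (f : Finset (Fin n) → ℝ) : Prop :=
  ∀ S : Finset (Fin n), ∀ i : Fin n, f S ≤ f (insert i S)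

/-- Submodular set function. -/
def Submod {n : ℕ} (f : Finset (Fin n) → ℝ) : Prop :=
  ∀ S : Finset (Fin n), ∀ i j : Fin n, i ∉ S → j ∉ S →
    marg f i (insert j S) ≤ marg f i S

/-- Second-order supermodular set function. -/
def SOSupermod {n : ℕ} (f : Finset (Fin n) → ℝ) : Prop :=
  ∀ S : Finset (Fin n), ∀ i j k : Fin n, i ∉ S → j ∉ S → k ∉ S →
    marg f i (insert k S) - marg f i (insert j (insert k S)) ≤
      marg f i S - marg f i (insert j S)

/-- Objective value of a length-(n+1) pseudo-neighbor sequence, where costs are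
counted with multiplicity via the singleton costs `cs`. -/
noncomputable def pseudoObj {n : ℕ} (u : Finset (Fin n) → ℝ) (cs : Fin n → ℝ)
    (P : List (Fin n)) : ℝ :=
  ∑ k ∈ Finset.range P.length,
    (((P.take (k + 1)).map cs).sum) * (u (prefSet P (k + 1)) - u (prefSet P k))

/-- The pseudo-neighbor of `L` obtained by inserting a second copy of the element in
(1-indexed) position `i` at (1-indexed) position `j`. -/
def pseudoNeighbor {n : ℕ} [NeZero n] (L : List (Fin n)) (i j : ℕ) : List (Fin n) :=
  L.insertIdx (j - 1) (elemAt L i)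

/-- `L` is locally optimal with respect to insertions: no pseudo-neighbor has strictly
smaller objective value. -/
def LocallyOptimalInsertions {n : ℕ} [NeZero n] (u c : Finset (Fin n) → ℝ) (cs : Fin n → ℝ)
    (L : List (Fin n)) : Prop :=
  ∀ i j : ℕ, 1 ≤ j → j < i → i ≤ n →
    objective u c L ≤ pseudoObj u cs (pseudoNeighbor L i j)

/-- The list obtained from `L` by removing the element in (1-indexed) position `i` and
reinserting it at (1-indexed) position `j`. -/
def moveList {n : ℕ} [NeZero n] (L : List (Fin n)) (i j : ℕ) : List (Fin n) :=
  (L.eraseIdx (i - 1)).insertIdx (j - 1) (elemAt L i)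

/-- `L'` is a move-neighbor of `L`. -/
def IsMoveNeighbor {n : ℕ} [NeZero n] (L L' : List (Fin n)) : Prop :=
  ∃ i j : ℕ, 1 ≤ i ∧ i ≤ n ∧ 1 ≤ j ∧ j ≤ n ∧ i ≠ j ∧ L' = moveList L i j

set_option linter.unusedSectionVars false

section AuxU
variable {n : ℕ} {u : Finset (Fin n) → ℝ}

lemma marg_nonneg' (hm : Mono u) (e : Fin n) (S : Finset (Fin n)) : 0 ≤ marg u e S :=
  sub_nonneg.2 (hm S e)

lemma u_union_le (hm : Mono u) (T S : Finset (Fin n)) : u S ≤ u (T ∪ S) := by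
  classical
  induction T using Finset.induction_on with
  | empty => simp
  | @insert a T ha ih =>
      calc u S ≤ u (T ∪ S) := ih
      _ ≤ u (insert a (T ∪ S)) := hm _ _
      _ = u (insert a T ∪ S) := by rw [Finset.insert_union]

lemma u_subset_le (hm : Mono u) {S T : Finset (Fin n)} (h : S ⊆ T) : u S ≤ u T := by
  have := u_union_le hm T S
  rwa [Finset.union_eq_left.2 h] at this

lemma marg_of_mem {e : Fin n} {S : Finset (Fin n)} (h : e ∈ S) : marg u e S = 0 := by
  simp [marg, Finset.insert_eq_self.2 h]

lemma marg_insert_le (hm : Mono u) (hs : Submod u) (e x : Fin n) (S : Finset (Fin n)) :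
    marg u e (insert x S) ≤ marg u e S := by
  classical
  by_cases he : e ∈ S
  · rw [marg_of_mem he, marg_of_mem (Finset.mem_insert_of_mem he)]
  by_cases hx : x ∈ S
  · rw [Finset.insert_eq_self.2 hx]
  by_cases hex : e = x
  · subst hex
    rw [marg_of_mem (Finset.mem_insert_self e S)]
    exact marg_nonneg' hm e S
  · exact hs S e x he hx

lemma marg_union_le (hm : Mono u) (hs : Submod u) (e : Fin n) (T S : Finset (Fin n)) :
    marg u e (T ∪ S) ≤ marg u e S := by
  classical
  induction T using Finset.induction_on with
  | empty => simp
  | @insert a T ha ih =>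
      calc marg u e (insert a T ∪ S) = marg u e (insert a (T ∪ S)) := by
            rw [Finset.insert_union]
      _ ≤ marg u e (T ∪ S) := marg_insert_le hm hs e a _
      _ ≤ marg u e S := ih

end AuxU

set_option linter.unusedSectionVars false

section AuxPref
variable {n : ℕ} [NeZero n]

lemma prefSet_zero (L : List (Fin n)) : prefSet L 0 = ∅ := rfl

lemma prefSet_succ (L : List (Fin n)) {k : ℕ} (h : k < L.length) :
    prefSet L (k + 1) = insert (L.getD k default) (prefSet L k) := by
  unfold prefSet
  rw [List.getD_eq_getElem L default h]
  ext x
  rw [List.take_succ, List.getElem?_eq_getElem h]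
  simp only [List.mem_toFinset, Finset.mem_insert, List.mem_append, Option.toList_some,
    List.mem_singleton]
  tauto

lemma prefSet_length (L : List (Fin n)) : prefSet L L.length = L.toFinset := by
  simp [prefSet]

lemma prefSet_of_le (L : List (Fin n)) {k : ℕ} (h : L.length ≤ k) :
    prefSet L k = L.toFinset := by
  unfold prefSet
  rw [List.take_of_length_le h]

lemma prefSet_mono (L : List (Fin n)) {j k : ℕ} (h : j ≤ k) : prefSet L j ⊆ prefSet L k := by
  intro x hx
  simp only [prefSet, List.mem_toFinset] at hx ⊢
  have := (List.take_prefix j (L.take k)).subset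
  rw [List.take_take, min_eq_left h] at this
  exact this hx

lemma getD_mem_prefSet (L : List (Fin n)) {b t : ℕ} (hb : b < L.length) (ht : b < t) :
    L.getD b default ∈ prefSet L t := by
  rw [List.getD_eq_getElem L default hb]
  have hb' : b < (L.take t).length := by
    rw [List.length_take]; omega
  have : (L.take t)[b] = L[b] := List.getElem_take ..
  rw [prefSet, List.mem_toFinset, ← this]
  exact List.getElem_mem _

lemma prefSet_take_add (L : List (Fin n)) (a k : ℕ) :
    prefSet L (a + k) = (L.take a).toFinset ∪ prefSet (L.drop a) k := by
  unfold prefSet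
  rw [List.take_add, List.toFinset_append]

end AuxPref

section SumAux
variable {n : ℕ} [NeZero n]

lemma list_map_sum_eq (cs : Fin n → ℝ) (l : List (Fin n)) :
    (l.map cs).sum = ∑ t ∈ Finset.range l.length, cs (l.getD t default) := by
  induction l with
  | nil => simp
  | cons a l ih =>
      rw [List.map_cons, List.sum_cons, List.length_cons, Finset.sum_range_succ']
      simp [ih, add_comm]

lemma cost_prefSet (cs : Fin n → ℝ) {L : List (Fin n)} (hnd : L.Nodup) {k : ℕ}
    (hk : k ≤ L.length) :
    ∑ e ∈ prefSet L k, cs e = ∑ t ∈ Finset.range k, cs (L.getD t default) := by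
  unfold prefSet
  rw [List.sum_toFinset _ (hnd.sublist (List.take_sublist k L)), list_map_sum_eq,
    List.length_take, min_eq_left hk]
  apply Finset.sum_congr rfl
  intro t ht
  have ht' : t < k := Finset.mem_range.1 ht
  have h1 : t < (L.take k).length := by rw [List.length_take]; omega
  have h2 : t < L.length := lt_of_lt_of_le ht' hk
  rw [List.getD_eq_getElem _ _ h1, List.getD_eq_getElem _ _ h2]
  rw [List.getElem_take]

lemma tri_swap (w U : ℕ → ℝ) (N : ℕ) :
    ∑ k ∈ Finset.range N, (∑ t ∈ Finset.range (k+1), w t) * (U (k+1) - U k)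
      = ∑ t ∈ Finset.range N, w t * (U N - U t) := by
  induction N with
  | zero => simp
  | succ N ih =>
      rw [Finset.sum_range_succ, ih, Finset.sum_range_succ (f := fun t => w t * (U (N+1) - U t)),
        Finset.sum_range_succ (f := w), add_mul, Finset.sum_mul]
      rw [← add_assoc, ← Finset.sum_add_distrib]
      have : ∀ t, w t * (U N - U t) + w t * (U (N + 1) - U N) = w t * (U (N+1) - U t) := by
        intro t; ring
      simp only [this]
end SumAux

noncomputable def psiSum {n : ℕ} [NeZero n] (u : Finset (Fin n) → ℝ) (cs : Fin n → ℝ)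
    (F : Finset (Fin n)) (Y : List (Fin n)) : ℝ :=
  ∑ k ∈ Finset.range Y.length,
    cs (Y.getD k default) * (u Finset.univ - u (F ∪ prefSet Y k))

section PsiAux
variable {n : ℕ} [NeZero n] (u : Finset (Fin n) → ℝ) (cs : Fin n → ℝ)

lemma psiSum_nil (F : Finset (Fin n)) : psiSum u cs F [] = 0 := by
  simp [psiSum]

lemma psiSum_cons (F : Finset (Fin n)) (x : Fin n) (Y : List (Fin n)) :
    psiSum u cs F (x :: Y) = cs x * (u Finset.univ - u F) + psiSum u cs (insert x F) Y := by
  unfold psiSum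
  rw [List.length_cons, Finset.sum_range_succ']
  have h0 : prefSet (x :: Y) 0 = ∅ := rfl
  have hsucc : ∀ k, prefSet (x :: Y) (k+1) = insert x (prefSet Y k) := by
    intro k
    unfold prefSet
    rw [List.take_succ_cons, List.toFinset_cons]
  simp only [hsucc, h0, List.getD_cons_succ, List.getD_cons_zero, Finset.union_empty]
  rw [add_comm]
  congr 1
  apply Finset.sum_congr rfl
  intro k _
  rw [Finset.union_insert, Finset.insert_union]

lemma psiSum_append (F : Finset (Fin n)) (X Y : List (Fin n)) :
    psiSum u cs F (X ++ Y) = psiSum u cs F X + psiSum u cs (F ∪ X.toFinset) Y := by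
  induction X generalizing F with
  | nil => simp [psiSum_nil]
  | cons x X ih =>
      rw [List.cons_append, psiSum_cons, psiSum_cons, ih, add_assoc]
      congr 2
      rw [List.toFinset_cons, Finset.union_insert, Finset.insert_union]

lemma abel_objective {u c : Finset (Fin n) → ℝ} (hc : ∀ S, c S = ∑ i ∈ S, cs i)
    {P : List (Fin n)} (hnd : P.Nodup) (hcompl : P.toFinset = Finset.univ) :
    objective u c P = psiSum u cs ∅ P := by
  unfold objective psiSum
  have hstep : ∀ k ∈ Finset.range P.length,
      c (prefSet P (k+1)) * (u (prefSet P (k+1)) - u (prefSet P k))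
        = (∑ t ∈ Finset.range (k+1), cs (P.getD t default))
            * (u (prefSet P (k+1)) - u (prefSet P k)) := by
    intro k hk
    rw [hc, cost_prefSet cs hnd (by have := Finset.mem_range.1 hk; omega)]
  rw [Finset.sum_congr rfl hstep,
    tri_swap (fun t => cs (P.getD t default)) (fun k => u (prefSet P k))]
  apply Finset.sum_congr rfl
  intro t _
  rw [Finset.empty_union, prefSet_length, hcompl]

end PsiAux

theorem insertIdx_eq_take_cons_drop {α : Type*} (x : α) :
    ∀ (k : ℕ) (l : List α), k ≤ l.length → l.insertIdx k x = l.take k ++ x :: l.drop k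
  | 0, l, _ => by simp
  | (k+1), [], h => by simp at h
  | (k+1), a :: l, h => by
      rw [List.insertIdx_succ_cons, insertIdx_eq_take_cons_drop x k l (by simpa using h)]
      simp

section Star
variable {n : ℕ} [NeZero n]

lemma permList_length {L : List (Fin n)} (hnd : L.Nodup) (hcompl : L.toFinset = Finset.univ) :
    L.length = n := by
  have h1 : L.toFinset.card = L.length := List.toFinset_card_of_nodup hnd
  rw [hcompl, Finset.card_univ, Fintype.card_fin] at h1
  omega

lemma star_ineq {u c : Finset (Fin n) → ℝ} {cs : Fin n → ℝ}
    (hc : ∀ S, c S = ∑ i ∈ S, cs i)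
    {L : List (Fin n)} (hLnd : L.Nodup) (hLc : L.toFinset = Finset.univ)
    (hopt : ∀ L', IsMoveNeighbor L L' → objective u c L ≤ objective u c L')
    (A B : List (Fin n)) (e : Fin n) (C : List (Fin n)) (hdec : L = A ++ B ++ e :: C) :
    ∑ k ∈ Finset.range B.length,
        cs (B.getD k default) * marg u e (A.toFinset ∪ prefSet B k)
      ≤ cs e * (u (A.toFinset ∪ B.toFinset) - u A.toFinset) := by
  classical
  by_cases hB : B = []
  · subst hB
    simp
  have hBlen : 0 < B.length := List.length_pos_iff.2 hB
  have lenL : L.length = n := permList_length hLnd hLc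
  set a := A.length with ha
  set b := A.length + B.length with hb
  have hlen : a + B.length + (C.length + 1) = n := by
    have h := lenL
    rw [hdec] at h
    simp only [List.length_append, List.length_cons, ha] at h ⊢
    omega
  -- the move list
  set M : List (Fin n) := A ++ e :: (B ++ C) with hM
  have hperm : L.Perm M := by
    rw [hdec, List.append_assoc, hM]
    exact List.Perm.append_left A List.perm_middle
  have hMnd : M.Nodup := hperm.nodup_iff.1 hLnd
  have hMc : M.toFinset = Finset.univ := by
    rw [← List.toFinset_eq_of_perm _ _ hperm, hLc]
  -- identify the move list
  have helem : elemAt L (b + 1) = e := by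
    unfold elemAt
    rw [Nat.add_sub_cancel, hdec]
    rw [List.getD_append_right _ _ _ _ (by simp [hb])]
    simp [hb]
  have hmove : moveList L (b + 1) (a + 1) = M := by
    unfold moveList
    rw [Nat.add_sub_cancel, Nat.add_sub_cancel, helem]
    rw [List.eraseIdx_eq_take_drop_succ]
    have h1 : L.take b = A ++ B := by
      rw [hdec]
      exact List.take_left' (by simp [hb])
    have h2 : L.drop (b + 1) = C := by
      rw [hdec]
      have heq : (A ++ B ++ e :: C) = ((A ++ B) ++ [e]) ++ C := by simp
      rw [heq]
      exact List.drop_left' (by simp [hb]; omega)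
    rw [h1, h2]
    rw [insertIdx_eq_take_cons_drop e a ((A ++ B) ++ C) (by simp only [List.length_append]; omega)]
    rw [List.append_assoc]
    rw [List.take_left' ha.symm, List.drop_left' ha.symm, hM]
  have hnbr : IsMoveNeighbor L M := by
    refine ⟨b + 1, a + 1, by omega, by omega, by omega, by omega, by omega, hmove.symm⟩
  have hob : objective u c L ≤ objective u c M := hopt M hnbr
  -- abel both
  rw [abel_objective cs hc hLnd hLc, abel_objective cs hc hMnd hMc] at hob
  have expandL : psiSum u cs ∅ L
      = psiSum u cs ∅ A + psiSum u cs A.toFinset B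
        + (cs e * (u Finset.univ - u (A.toFinset ∪ B.toFinset))
          + psiSum u cs (insert e (A.toFinset ∪ B.toFinset)) C) := by
    rw [hdec, psiSum_append, psiSum_append, psiSum_cons]
    rw [Finset.empty_union, Finset.empty_union, List.toFinset_append]
  have expandM : psiSum u cs ∅ M
      = psiSum u cs ∅ A + (cs e * (u Finset.univ - u A.toFinset)
          + (psiSum u cs (insert e A.toFinset) B
            + psiSum u cs (insert e (A.toFinset ∪ B.toFinset)) C)) := by
    rw [hM, psiSum_append, psiSum_cons, psiSum_append]
    rw [Finset.empty_union, Finset.insert_union]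
  have hdiff : psiSum u cs A.toFinset B - psiSum u cs (insert e A.toFinset) B
      = ∑ k ∈ Finset.range B.length,
          cs (B.getD k default) * marg u e (A.toFinset ∪ prefSet B k) := by
    unfold psiSum
    rw [← Finset.sum_sub_distrib]
    apply Finset.sum_congr rfl
    intro k _
    rw [Finset.insert_union]
    unfold marg
    ring
  rw [expandL, expandM] at hob
  linarith [hdiff]
end Star

theorem local_opt_four_approx (n : ℕ) [NeZero n] (u c : Finset (Fin n) → ℝ) (cs : Fin n → ℝ)
    (hu0 : u ∅ = 0) (hu_nonneg : ∀ S, 0 ≤ u S) (hu_mono : Mono u)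
    (hu_sub : Submod u) (hu_sos : SOSupermod u)
    (hcs_pos : ∀ i, 0 < cs i) (hc : ∀ S, c S = ∑ i ∈ S, cs i)
    (L : List (Fin n)) (hL : IsPermList L)
    (hopt : ∀ L', IsMoveNeighbor L L' → objective u c L ≤ objective u c L') :
    ∀ O, IsPermList O → objective u c L ≤ 4 * objective u c O := by
  classical
  intro O hO
  obtain ⟨hLnd, hLmem⟩ := hL
  obtain ⟨hOnd, hOmem⟩ := hO
  have hLc : L.toFinset = Finset.univ :=
    Finset.eq_univ_iff_forall.2 fun x => List.mem_toFinset.2 (hLmem x)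
  have hOc : O.toFinset = Finset.univ :=
    Finset.eq_univ_iff_forall.2 fun x => List.mem_toFinset.2 (hOmem x)
  have lenL : L.length = n := permList_length hLnd hLc
  have lenO : O.length = n := permList_length hOnd hOc
  set o : ℕ → Fin n := fun p => O.getD p default with ho
  set m : ℕ → ℕ → ℝ := fun p t => marg u (o p) (prefSet O p ∪ prefSet L t) with hm
  set Cc : ℕ → ℝ := fun k => ∑ t ∈ Finset.range k, cs (L.getD t default) with hCc
  set Dp : ℕ → ℝ := fun p => ∑ s ∈ Finset.range (p + 1), cs (o s) with hDp
  -- basic positivity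
  have hCc_mono : ∀ {j k : ℕ}, j ≤ k → Cc j ≤ Cc k := by
    intro j k hjk
    apply Finset.sum_le_sum_of_subset_of_nonneg (Finset.range_subset_range.2 hjk)
    intro t _ _
    exact (hcs_pos _).le
  have hCc_nonneg : ∀ k, 0 ≤ Cc k := fun k => by
    simpa [hCc] using hCc_mono (Nat.zero_le k)
  have hDp_pos : ∀ p, 0 < Dp p := by
    intro p
    apply Finset.sum_pos (fun s _ => hcs_pos _) (Finset.nonempty_range_add_one)
  -- prefix sets at the top
  have prefL_univ : prefSet L n = Finset.univ := by
    have h := prefSet_length L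
    rw [lenL, hLc] at h
    exact h
  have prefO_univ : prefSet O n = Finset.univ := by
    have h := prefSet_length O
    rw [lenO, hOc] at h
    exact h
  have hu_top : ∀ S, u S ≤ u Finset.univ := fun S => u_subset_le hu_mono (Finset.subset_univ S)
  -- facts about m
  have m_nonneg : ∀ p t, 0 ≤ m p t := fun p t => marg_nonneg' hu_mono _ _
  have m_succ_le : ∀ p t, t < n → m p (t + 1) ≤ m p t := by
    intro p t ht
    simp only [hm]
    rw [prefSet_succ L (by rw [lenL]; exact ht), Finset.union_insert]
    exact marg_insert_le hu_mono hu_sub _ _ _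
  have m_le_zero : ∀ p, ∀ t, t ≤ n → m p t ≤ m p 0 := by
    intro p t
    induction t with
    | zero => intro; exact le_refl _
    | succ t ih =>
        intro ht
        exact le_trans (m_succ_le p t (by omega)) (ih (by omega))
  have m_le_margL : ∀ p t, m p t ≤ marg u (o p) (prefSet L t) := by
    intro p t
    simp only [hm]
    exact marg_union_le hu_mono hu_sub _ _ _
  have m_eq_zero : ∀ p t, L.idxOf (o p) < t → m p t = 0 := by
    intro p t hbt
    have hmem : o p ∈ L := hLmem _
    have hbp : L.idxOf (o p) < L.length := List.idxOf_lt_length_iff.2 hmem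
    have hget : L.getD (L.idxOf (o p)) default = o p := by
      rw [List.getD_eq_getElem _ _ hbp]
      exact List.getElem_idxOf hbp
    have : o p ∈ prefSet L t := by
      rw [← hget]; exact getD_mem_prefSet L hbp hbt
    simp only [hm]
    exact marg_of_mem (Finset.mem_union_right _ this)
  have m_n_zero : ∀ p, m p n = 0 := by
    intro p
    simp only [hm, prefL_univ]
    have : prefSet O p ∪ Finset.univ = Finset.univ := by simp
    rw [this]
    exact marg_of_mem (Finset.mem_univ _)
  have col_telescope : ∀ t, t ≤ n → ∑ p ∈ Finset.range n, m p t = u Finset.univ - u (prefSet L t) := by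
    intro t ht
    have hterm : ∀ p ∈ Finset.range n, m p t
        = u (prefSet O (p + 1) ∪ prefSet L t) - u (prefSet O p ∪ prefSet L t) := by
      intro p hp
      have hp' : p < n := Finset.mem_range.1 hp
      simp only [hm, marg]
      rw [prefSet_succ O (by rw [lenO]; exact hp'), Finset.insert_union]
    rw [Finset.sum_congr rfl hterm,
      Finset.sum_range_sub (f := fun p => u (prefSet O p ∪ prefSet L t)) n]
    rw [prefO_univ, prefSet_zero, Finset.empty_union]
    have : Finset.univ ∪ prefSet L t = Finset.univ := by simp
    rw [this]
  -- objective forms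
  have objL1 : objective u c L
      = ∑ q ∈ Finset.range n, Cc (q + 1) * (u (prefSet L (q + 1)) - u (prefSet L q)) := by
    unfold objective
    rw [lenL]
    apply Finset.sum_congr rfl
    intro q hq
    rw [hc, cost_prefSet cs hLnd (by rw [lenL]; exact Finset.mem_range.1 hq)]
  have objL2 : objective u c L
      = ∑ t ∈ Finset.range n, cs (L.getD t default) * (u Finset.univ - u (prefSet L t)) := by
    rw [abel_objective cs hc hLnd hLc]
    unfold psiSum
    rw [lenL]
    apply Finset.sum_congr rfl
    intro t _
    rw [Finset.empty_union]
  have objO1 : objective u c O = ∑ p ∈ Finset.range n, Dp p * m p 0 := by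
    unfold objective
    rw [lenO]
    apply Finset.sum_congr rfl
    intro p hp
    have hp' : p < O.length := by rw [lenO]; exact Finset.mem_range.1 hp
    rw [hc, cost_prefSet cs hOnd (by omega)]
    simp only [hm, marg, prefSet_zero, Finset.union_empty]
    rw [prefSet_succ O hp']
  have objL_phi : objective u c L
      = ∑ p ∈ Finset.range n, ∑ t ∈ Finset.range n, cs (L.getD t default) * m p t := by
    rw [objL2, Finset.sum_comm]
    apply Finset.sum_congr rfl
    intro t ht
    rw [← col_telescope t (by have := Finset.mem_range.1 ht; omega), Finset.mul_sum]
  -- the threshold positions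
  set jp : ℕ → ℕ := fun p =>
    if h : ∃ k, k < n ∧ 2 * Dp p < Cc (k + 1) then Nat.find h else n with hjp
  have hjp_le : ∀ p, jp p ≤ n := by
    intro p
    simp only [hjp]
    split
    · next h => exact (Nat.find_spec h).1.le
    · exact le_refl n
  have hjp1 : ∀ p q, q < n → jp p ≤ q → 2 * Dp p < Cc (q + 1) := by
    intro p q hq hle
    simp only [hjp] at hle
    split at hle
    · next h =>
        exact lt_of_lt_of_le (Nat.find_spec h).2 (hCc_mono (by omega))
    · omega
  have hjp2 : ∀ p k, k < jp p → Cc (k + 1) ≤ 2 * Dp p := by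
    intro p k hk
    simp only [hjp] at hk
    split at hk
    · next h =>
        have := Nat.find_min h hk
        have hkn : k < n := by
          have := (Nat.find_spec h).1; omega
        push_neg at this
        exact this hkn
    · next h =>
        push_neg at h
        exact h k (by omega)
  have hjp3 : ∀ p, L.idxOf (o p) < n → 2 * Dp p < Cc (L.idxOf (o p) + 1)
      → jp p ≤ L.idxOf (o p) := by
    intro p hbp hcc
    have hex : ∃ k, k < n ∧ 2 * Dp p < Cc (k + 1) := ⟨_, hbp, hcc⟩
    simp only [hjp, dif_pos hex]
    exact Nat.find_le ⟨hbp, hcc⟩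
  -- the key per-row bound
  have key : ∀ p ∈ Finset.range n,
      ∑ t ∈ Finset.range n, cs (L.getD t default) * m p t
        ≤ 2 * Dp p * m p 0 + cs (o p) * (u Finset.univ - u (prefSet L (jp p))) := by
    intro p hp
    have hmem : o p ∈ L := hLmem _
    have hbp : L.idxOf (o p) < L.length := List.idxOf_lt_length_iff.2 hmem
    set bp := L.idxOf (o p) with hbpdef
    have hbpn : bp < n := by rw [lenL] at hbp; exact hbp
    have hget : L.getD bp default = o p := by
      rw [List.getD_eq_getElem _ _ hbp]
      exact List.getElem_idxOf hbp
    have hRm_nonneg : ∀ k : ℕ, 0 ≤ u Finset.univ - u (prefSet L k) :=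
      fun k => sub_nonneg.2 (hu_top _)
    have tail0 : ∑ t ∈ Finset.Ico (bp + 1) n, cs (L.getD t default) * m p t = 0 := by
      apply Finset.sum_eq_zero
      intro t ht
      rw [m_eq_zero p t (by have := (Finset.mem_Ico.1 ht).1; omega), mul_zero]
    have head : ∀ k, k ≤ n →
        ∑ t ∈ Finset.Ico 0 k, cs (L.getD t default) * m p t ≤ Cc k * m p 0 := by
      intro k hk
      have h1 : ∑ t ∈ Finset.Ico 0 k, cs (L.getD t default) * m p t
          ≤ ∑ t ∈ Finset.Ico 0 k, cs (L.getD t default) * m p 0 := by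
        apply Finset.sum_le_sum
        intro t ht
        exact mul_le_mul_of_nonneg_left
          (m_le_zero p t (by have := (Finset.mem_Ico.1 ht).2; omega)) (hcs_pos _).le
      refine h1.trans (le_of_eq ?_)
      rw [← Finset.sum_mul, ← Finset.range_eq_Ico]
    have hS2 : ∑ t ∈ Finset.Ico bp (bp + 1), cs (L.getD t default) * m p t
        ≤ cs (o p) * (u Finset.univ - u (prefSet L bp)) := by
      rw [Finset.sum_Ico_eq_sum_range]
      simp only [Nat.add_sub_cancel_left, Finset.sum_range_one, Nat.add_zero, hget]
      apply mul_le_mul_of_nonneg_left _ (hcs_pos _).le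
      refine (m_le_margL p bp).trans ?_
      unfold marg
      have : u (insert (o p) (prefSet L bp)) ≤ u Finset.univ := hu_top _
      linarith
    by_cases hcase : 2 * Dp p < Cc (bp + 1)
    · -- far case: use the local-optimality inequality
      have hjbp : jp p ≤ bp := hjp3 p hbpn hcase
      have hjpn : jp p ≤ n := hjp_le p
      have hS1 : ∑ t ∈ Finset.Ico (jp p) bp, cs (L.getD t default) * m p t
          ≤ cs (o p) * (u (prefSet L bp) - u (prefSet L (jp p))) := by
        set a := jp p with hadef
        set B : List (Fin n) := (L.drop a).take (bp - a) with hB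
        have hlenB : B.length = bp - a := by
          rw [hB, List.length_take, List.length_drop]
          omega
        have hAB : L.take a ++ B = L.take bp := by
          rw [hB, ← List.take_add]
          congr 1
          omega
        have hdec : L = L.take a ++ B ++ (o p) :: L.drop (bp + 1) := by
          rw [hAB]
          conv_lhs => rw [← List.take_append_drop bp L]
          congr 1
          rw [List.drop_eq_getElem_cons hbp]
          congr 1
          exact List.getElem_idxOf hbp
        have hstar := star_ineq hc hLnd hLc hopt (L.take a) B (o p) (L.drop (bp + 1)) hdec
        have hBt : (L.take a).toFinset ∪ B.toFinset = prefSet L bp := by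
          rw [← List.toFinset_append, hAB]
          rfl
        have hAt : (L.take a).toFinset = prefSet L a := rfl
        rw [hBt, hAt] at hstar
        have hconv : ∀ k ∈ Finset.range B.length,
            cs (B.getD k default) * marg u (o p) (prefSet L a ∪ prefSet B k)
              = cs (L.getD (a + k) default) * marg u (o p) (prefSet L (a + k)) := by
          intro k hk
          have hk' : k < bp - a := by rw [← hlenB]; exact Finset.mem_range.1 hk
          have hkd : k < (L.drop a).length := by rw [List.length_drop]; omega
          have hak : a + k < L.length := by omega
          congr 1
          · congr 1
            rw [hB, List.getD_eq_getElem _ _ (by rw [hlenB] at hk ⊢; exact hk'),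
              List.getD_eq_getElem _ _ hak]
            rw [List.getElem_take, List.getElem_drop]
          · congr 1
            have hpB : prefSet B k = ((L.drop a).take k).toFinset := by
              unfold prefSet
              rw [hB, List.take_take, min_eq_left hk'.le]
            rw [hpB, prefSet_take_add L a k]
            rfl
        rw [Finset.sum_congr rfl hconv] at hstar
        refine le_trans ?_ hstar
        rw [Finset.sum_Ico_eq_sum_range, hlenB]
        apply Finset.sum_le_sum
        intro k hk
        exact mul_le_mul_of_nonneg_left (m_le_margL p (a + k)) (hcs_pos _).le
      -- head part
      have hS0 : ∑ t ∈ Finset.Ico 0 (jp p), cs (L.getD t default) * m p t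
          ≤ 2 * Dp p * m p 0 := by
        refine (head (jp p) hjpn).trans ?_
        apply mul_le_mul_of_nonneg_right _ (m_nonneg p 0)
        rcases Nat.eq_zero_or_pos (jp p) with h0 | h0
        · rw [h0]
          simp only [hCc, Finset.range_zero, Finset.sum_empty]
          exact (mul_pos two_pos (hDp_pos p)).le
        · have : (jp p - 1) + 1 = jp p := by omega
          rw [← this]
          exact hjp2 p (jp p - 1) (by omega)
      -- combine
      have e3 := Finset.sum_Ico_consecutive (fun t => cs (L.getD t default) * m p t)
        (Nat.le_succ bp) (by omega : bp + 1 ≤ n)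
      have e2 := Finset.sum_Ico_consecutive (fun t => cs (L.getD t default) * m p t)
        hjbp (by omega : bp ≤ n)
      have e1 := Finset.sum_Ico_consecutive (fun t => cs (L.getD t default) * m p t)
        (Nat.zero_le (jp p)) (by omega : jp p ≤ n)
      rw [Finset.range_eq_Ico, ← e1, ← e2, ← e3]
      rw [tail0]
      linarith
    · -- near case
      push_neg at hcase
      have e3 := Finset.sum_Ico_consecutive (fun t => cs (L.getD t default) * m p t)
        (Nat.zero_le (bp + 1)) (by omega : bp + 1 ≤ n)
      rw [Finset.range_eq_Ico, ← e3]
      rw [tail0, add_zero]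
      have h1 := head (bp + 1) (by omega)
      have h2 : Cc (bp + 1) * m p 0 ≤ 2 * Dp p * m p 0 :=
        mul_le_mul_of_nonneg_right hcase (m_nonneg p 0)
      have h3 : 0 ≤ cs (o p) * (u Finset.univ - u (prefSet L (jp p))) :=
        mul_nonneg (hcs_pos _).le (hRm_nonneg _)
      linarith
  -- aggregate over rows
  have agg : objective u c L
      ≤ 2 * objective u c O
        + ∑ p ∈ Finset.range n, cs (o p) * (u Finset.univ - u (prefSet L (jp p))) := by
    rw [objL_phi, objO1, Finset.mul_sum, ← Finset.sum_add_distrib]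
    apply Finset.sum_le_sum
    intro p hp
    have h1 := key p hp
    have h2 : 2 * (Dp p * m p 0) = 2 * Dp p * m p 0 := by ring
    linarith
  -- telescoping representation of the tails
  have step2 : ∀ p' p : ℕ, m p' (jp p)
      = ∑ q ∈ Finset.range n, (if jp p ≤ q then m p' q - m p' (q + 1) else 0) := by
    intro p' p
    rw [← Finset.sum_filter]
    have hfil : (Finset.range n).filter (fun q => jp p ≤ q) = Finset.Ico (jp p) n := by
      ext q
      simp only [Finset.mem_filter, Finset.mem_range, Finset.mem_Ico]
      omega
    rw [hfil]
    rw [Finset.sum_Ico_eq_sub _ (hjp_le p)]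
    rw [Finset.sum_range_sub' (f := fun q => m p' q) n,
      Finset.sum_range_sub' (f := fun q => m p' q) (jp p)]
    rw [m_n_zero p']
    ring
  -- the tail bound
  have hT : ∑ p ∈ Finset.range n, cs (o p) * (u Finset.univ - u (prefSet L (jp p)))
      ≤ 1 / 2 * objective u c L := by
    have e1 : ∀ p ∈ Finset.range n, cs (o p) * (u Finset.univ - u (prefSet L (jp p)))
        = ∑ p' ∈ Finset.range n, ∑ q ∈ Finset.range n,
            (if jp p ≤ q then cs (o p) * (m p' q - m p' (q + 1)) else 0) := by
      intro p _
      rw [← col_telescope (jp p) (hjp_le p), Finset.mul_sum]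
      apply Finset.sum_congr rfl
      intro p' _
      rw [step2 p' p, Finset.mul_sum]
      apply Finset.sum_congr rfl
      intro q _
      rw [mul_ite, mul_zero]
    rw [Finset.sum_congr rfl e1, Finset.sum_comm]
    have e2 : ∀ p' ∈ Finset.range n, ∑ p ∈ Finset.range n, ∑ q ∈ Finset.range n,
          (if jp p ≤ q then cs (o p) * (m p' q - m p' (q + 1)) else 0)
        = ∑ q ∈ Finset.range n, ∑ p ∈ Finset.range n,
          (if jp p ≤ q then cs (o p) * (m p' q - m p' (q + 1)) else 0) :=
      fun p' _ => Finset.sum_comm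
    rw [Finset.sum_congr rfl e2, Finset.sum_comm]
    have e3 : ∀ q ∈ Finset.range n, ∀ p' ∈ Finset.range n,
        ∑ p ∈ Finset.range n, (if jp p ≤ q then cs (o p) * (m p' q - m p' (q + 1)) else 0)
          = (∑ p ∈ Finset.range n, if jp p ≤ q then cs (o p) else 0)
              * (m p' q - m p' (q + 1)) := by
      intro q _ p' _
      rw [Finset.sum_mul]
      apply Finset.sum_congr rfl
      intro p _
      rw [ite_mul, zero_mul]
    have hSq : ∀ q, q < n →
        (∑ p ∈ Finset.range n, if jp p ≤ q then cs (o p) else 0) ≤ Cc (q + 1) / 2 := by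
      intro q hq
      rw [← Finset.sum_filter]
      set F := (Finset.range n).filter (fun p => jp p ≤ q) with hF
      rcases F.eq_empty_or_nonempty with hFe | hFne
      · rw [hFe, Finset.sum_empty]
        have := hCc_nonneg (q + 1)
        linarith
      · set pm := F.max' hFne with hpm
        have hpmF : pm ∈ F := F.max'_mem hFne
        have hpmr := Finset.mem_filter.1 hpmF
        have hlt : 2 * Dp pm < Cc (q + 1) := hjp1 pm q hq hpmr.2
        have hsub : F ⊆ Finset.range (pm + 1) := by
          intro x hx
          rw [Finset.mem_range]
          have := F.le_max' x hx
          omega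
        have hle : ∑ p ∈ F, cs (o p) ≤ ∑ p ∈ Finset.range (pm + 1), cs (o p) :=
          Finset.sum_le_sum_of_subset_of_nonneg hsub (fun i _ _ => (hcs_pos _).le)
        have : ∑ p ∈ Finset.range (pm + 1), cs (o p) = Dp pm := rfl
        linarith
    have hd_nonneg : ∀ p' q, q < n → 0 ≤ m p' q - m p' (q + 1) := by
      intro p' q hq
      have := m_succ_le p' q hq
      linarith
    calc ∑ q ∈ Finset.range n, ∑ p' ∈ Finset.range n,
          ∑ p ∈ Finset.range n, (if jp p ≤ q then cs (o p) * (m p' q - m p' (q + 1)) else 0)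
        = ∑ q ∈ Finset.range n, ∑ p' ∈ Finset.range n,
            (∑ p ∈ Finset.range n, if jp p ≤ q then cs (o p) else 0)
              * (m p' q - m p' (q + 1)) := by
          apply Finset.sum_congr rfl
          intro q hq
          exact Finset.sum_congr rfl (fun p' hp' => e3 q hq p' hp')
      _ ≤ ∑ q ∈ Finset.range n, ∑ p' ∈ Finset.range n,
            Cc (q + 1) / 2 * (m p' q - m p' (q + 1)) := by
          apply Finset.sum_le_sum
          intro q hq
          apply Finset.sum_le_sum
          intro p' _
          exact mul_le_mul_of_nonneg_right (hSq q (Finset.mem_range.1 hq))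
            (hd_nonneg p' q (Finset.mem_range.1 hq))
      _ = ∑ q ∈ Finset.range n, Cc (q + 1) / 2 * (u (prefSet L (q + 1)) - u (prefSet L q)) := by
          apply Finset.sum_congr rfl
          intro q hq
          have hq' : q < n := Finset.mem_range.1 hq
          rw [← Finset.mul_sum, Finset.sum_sub_distrib,
            col_telescope q (by omega), col_telescope (q + 1) (by omega)]
          congr 1
          ring
      _ = 1 / 2 * objective u c L := by
          rw [objL1, Finset.mul_sum]
          apply Finset.sum_congr rfl
          intro q _
          ring
  have hO_final : objective u c L ≤ 2 * objective u c O + 1 / 2 * objective u c L :=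
    le_trans agg (by linarith)
  linarith
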